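/- Let S be a semitransitive subsemigroup of the singular part I_n \ S_n with |S| ≤ 2n, let g and h be the two distinct non-zero idempotents of S, and let S' = gSg ∪ gSh ∪ hSg ∪ hSh (where eSf = {e·σ·f : σ ∈ S}). Then S' is a subsemigroup of I_n \ S_n, S' is semitransitive, and S' induces the same semitransitivity preorder as S: for all x, y ∈ X, there exists φ ∈ S' with φ(x) = y if and only if there exists φ ∈ S with φ(x) = y. -/
import Mathlib

/-- `ISemi n` is the symmetric inverse semigroup `I_n`, realized as the set of all
partial injective maps (partial permutations) of the `n`-element set `Fin n`,
with composition given by `PEquiv.trans` (apply the left factor first, matching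
the right-action convention `x φ`). -/
abbrev ISemi (n : ℕ) := PEquiv (Fin n) (Fin n)

/-- `S` is a subsemigroup of `I_n`: a subset closed under composition. -/
def IsSubsemigroup {n : ℕ} (S : Set (ISemi n)) : Prop :=
  ∀ a ∈ S, ∀ b ∈ S, a.trans b ∈ S

/-- `φ` belongs to the singular part `I_n \ S_n`: its domain is a proper subset
of the underlying set, i.e. it is undefined somewhere. -/
def IsSingular {n : ℕ} (φ : ISemi n) : Prop :=
  ∃ x : Fin n, φ x = none

/-- `S` is semitransitive: for all `x, y` there is `φ ∈ S` with `φ x = y` or `φ y = x`. -/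
def Semitransitive {n : ℕ} (S : Set (ISemi n)) : Prop :=
  ∀ x y : Fin n, ∃ φ ∈ S, φ x = some y ∨ φ y = some x

/-- The semitransitivity preorder induced by `S`: `x ≥ y` iff some `φ ∈ S` maps `x` to `y`. -/
def STGe {n : ℕ} (S : Set (ISemi n)) (x y : Fin n) : Prop :=
  ∃ φ ∈ S, φ x = some y

/-- The transitivity block of `x`: the equivalence class of `x` under `x ≥ y ∧ y ≥ x`. -/
def STBlock {n : ℕ} (S : Set (ISemi n)) (x : Fin n) : Set (Fin n) :=
  {y | STGe S x y ∧ STGe S y x}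

/-- `k`-th power of `φ` under composition (`pePow φ 0` is the identity). -/
def pePow {n : ℕ} (φ : ISemi n) : ℕ → ISemi n
  | 0 => PEquiv.refl (Fin n)
  | k + 1 => (pePow φ k).trans φ

lemma pePow_add {n : ℕ} (φ : ISemi n) (a b : ℕ) :
    pePow φ (a + b) = (pePow φ a).trans (pePow φ b) := by
  induction b with
  | zero => simp [pePow, PEquiv.trans_refl]
  | succ k ih => rw [← Nat.add_assoc]; simp [pePow, ih, PEquiv.trans_assoc]

lemma pePow_mem {n : ℕ} {S : Set (ISemi n)} (hsub : IsSubsemigroup S)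
    {φ : ISemi n} (hφ : φ ∈ S) : ∀ k, pePow φ (k + 1) ∈ S := by
  intro k
  induction k with
  | zero => simpa [pePow, PEquiv.refl_trans] using hφ
  | succ m ih => exact hsub _ ih _ hφ

lemma pePow_fix {n : ℕ} {φ : ISemi n} {x : Fin n} (hx : φ x = some x) :
    ∀ k, pePow φ k x = some x := by
  intro k
  induction k with
  | zero => rfl
  | succ m ih =>
    show ((pePow φ m).trans φ) x = some x
    rw [PEquiv.trans_eq_some]
    exact ⟨x, ih, hx⟩

lemma exists_idem_pow {n : ℕ} (φ : ISemi n) :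
    ∃ k, 1 ≤ k ∧ (pePow φ k).trans (pePow φ k) = pePow φ k := by
  have hfin : Finite (ISemi n) :=
    Finite.of_injective (fun f : ISemi n => f.toFun) (fun a b hab => PEquiv.ext (congrFun hab))
  obtain ⟨i, j, hne, hij⟩ :=
    Finite.exists_ne_map_eq_of_infinite (fun k : ℕ => pePow φ (k + 1))
  wlog hlt : i < j generalizing i j
  · exact this j i (Ne.symm hne) hij.symm (by omega)
  set p := j - i with hp
  have hp1 : 1 ≤ p := by omega
  have hstep : ∀ m, i + 1 ≤ m → pePow φ (m + p) = pePow φ m := by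
    intro m hm
    calc pePow φ (m + p) = pePow φ ((j + 1) + (m - (i + 1))) := by congr 1; omega
      _ = (pePow φ (j + 1)).trans (pePow φ (m - (i + 1))) := pePow_add ..
      _ = (pePow φ (i + 1)).trans (pePow φ (m - (i + 1))) := by rw [hij]
      _ = pePow φ ((i + 1) + (m - (i + 1))) := (pePow_add ..).symm
      _ = pePow φ m := by congr 1; omega
  have hmul : ∀ t m, i + 1 ≤ m → pePow φ (m + p * t) = pePow φ m := by
    intro t
    induction t with
    | zero => simp
    | succ s ih =>
      intro m hm
      have heq : m + p * (s + 1) = (m + p * s) + p := by ring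
      rw [heq, hstep _ (by omega), ih m hm]
  have hk : i + 1 ≤ p * (i + 1) := by nlinarith
  refine ⟨p * (i + 1), by omega, ?_⟩
  rw [← pePow_add]
  exact hmul (i + 1) (p * (i + 1)) hk

/-- with `g, h` the two distinct non-zero idempotents of a
semitransitive subsemigroup `S` of the singular part with `|S| ≤ 2n`, the set
`S' = gSg ∪ gSh ∪ hSg ∪ hSh` is a semitransitive subsemigroup of the singular
part inducing the same semitransitivity preorder as `S`. -/
theorem stmt14 (n : ℕ) (hn : 1 ≤ n) (S : Set (ISemi n))
    (hsub : IsSubsemigroup S)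
    (hsing : ∀ φ ∈ S, IsSingular φ)
    (hst : Semitransitive S)
    (hcard : S.ncard ≤ 2 * n)
    (g h : ISemi n) (hg : g ∈ S) (hh : h ∈ S) (hgh : g ≠ h)
    (hgid : g.trans g = g) (hhid : h.trans h = h) (hg0 : g ≠ ⊥) (hh0 : h ≠ ⊥)
    (honly : ∀ e ∈ S, e.trans e = e → e ≠ ⊥ → e = g ∨ e = h)
    (S' : Set (ISemi n))
    (hS' : S' = {φ : ISemi n | ∃ σ ∈ S, φ = g.trans (σ.trans g) ∨
      φ = g.trans (σ.trans h) ∨ φ = h.trans (σ.trans g) ∨ φ = h.trans (σ.trans h)}) :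
    IsSubsemigroup S' ∧ (∀ φ ∈ S', IsSingular φ) ∧ Semitransitive S' ∧
      (∀ x y : Fin n, STGe S' x y ↔ STGe S x y) := by
  subst hS'
  -- every x is fixed by g or h
  have hcover : ∀ x : Fin n, g x = some x ∨ h x = some x := by
    intro x
    obtain ⟨φ, hφS, hφx⟩ := hst x x
    have hφx : φ x = some x := by tauto
    obtain ⟨k, hk1, hkid⟩ := exists_idem_pow φ
    have hkS : pePow φ k ∈ S := by
      obtain ⟨m, rfl⟩ : ∃ m, k = m + 1 := ⟨k - 1, by omega⟩
      exact pePow_mem hsub hφS m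
    have hfix : pePow φ k x = some x := pePow_fix hφx k
    have hne : pePow φ k ≠ ⊥ := by
      intro hb; rw [hb] at hfix; simp [PEquiv.bot_apply] at hfix
    rcases honly _ hkS hkid hne with he | he
    · left; rw [← he]; exact hfix
    · right; rw [← he]; exact hfix
  have hmemS : ∀ φ ∈ {φ : ISemi n | ∃ σ ∈ S, φ = g.trans (σ.trans g) ∨
      φ = g.trans (σ.trans h) ∨ φ = h.trans (σ.trans g) ∨ φ = h.trans (σ.trans h)}, φ ∈ S := by
    rintro φ ⟨σ, hσ, hc⟩
    rcases hc with rfl | rfl | rfl | rfl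
    · exact hsub _ hg _ (hsub _ hσ _ hg)
    · exact hsub _ hg _ (hsub _ hσ _ hh)
    · exact hsub _ hh _ (hsub _ hσ _ hg)
    · exact hsub _ hh _ (hsub _ hσ _ hh)
  have hSTGe : ∀ x y : Fin n, STGe {φ : ISemi n | ∃ σ ∈ S, φ = g.trans (σ.trans g) ∨
      φ = g.trans (σ.trans h) ∨ φ = h.trans (σ.trans g) ∨ φ = h.trans (σ.trans h)} x y ↔ STGe S x y := by
    intro x y
    constructor
    · rintro ⟨φ, hφ, hxy⟩
      exact ⟨φ, hmemS φ hφ, hxy⟩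
    · rintro ⟨σ, hσ, hxy⟩
      rcases hcover x with hex | hex <;> rcases hcover y with hey | hey
      · exact ⟨g.trans (σ.trans g), ⟨σ, hσ, Or.inl rfl⟩,
          by rw [PEquiv.trans_eq_some]; exact ⟨x, hex, by rw [PEquiv.trans_eq_some]; exact ⟨y, hxy, hey⟩⟩⟩
      · exact ⟨g.trans (σ.trans h), ⟨σ, hσ, Or.inr (Or.inl rfl)⟩,
          by rw [PEquiv.trans_eq_some]; exact ⟨x, hex, by rw [PEquiv.trans_eq_some]; exact ⟨y, hxy, hey⟩⟩⟩
      · exact ⟨h.trans (σ.trans g), ⟨σ, hσ, Or.inr (Or.inr (Or.inl rfl))⟩,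
          by rw [PEquiv.trans_eq_some]; exact ⟨x, hex, by rw [PEquiv.trans_eq_some]; exact ⟨y, hxy, hey⟩⟩⟩
      · exact ⟨h.trans (σ.trans h), ⟨σ, hσ, Or.inr (Or.inr (Or.inr rfl))⟩,
          by rw [PEquiv.trans_eq_some]; exact ⟨x, hex, by rw [PEquiv.trans_eq_some]; exact ⟨y, hxy, hey⟩⟩⟩
  refine ⟨?_, ?_, ?_, hSTGe⟩
  · -- subsemigroup
    rintro a ⟨σ, hσ, hca⟩ b ⟨τ, hτ, hcb⟩
    have key : ∀ e₁ f₁ e₂ f₂ : ISemi n, e₁ ∈ S → f₁ ∈ S → e₂ ∈ S → f₂ ∈ S →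
        ∃ ρ ∈ S, (e₁.trans (σ.trans f₁)).trans (e₂.trans (τ.trans f₂))
          = e₁.trans (ρ.trans f₂) := by
      intro e₁ f₁ e₂ f₂ he₁ hf₁ he₂ hf₂
      refine ⟨σ.trans (f₁.trans (e₂.trans τ)), hsub _ hσ _ (hsub _ hf₁ _ (hsub _ he₂ _ hτ)), ?_⟩
      simp only [PEquiv.trans_assoc]
    rcases hca with rfl | rfl | rfl | rfl <;> rcases hcb with rfl | rfl | rfl | rfl
    · obtain ⟨ρ, hρ, hrw⟩ := key g g g g hg hg hg hg; exact ⟨ρ, hρ, Or.inl hrw⟩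
    · obtain ⟨ρ, hρ, hrw⟩ := key g g g h hg hg hg hh; exact ⟨ρ, hρ, Or.inr (Or.inl hrw)⟩
    · obtain ⟨ρ, hρ, hrw⟩ := key g g h g hg hg hh hg; exact ⟨ρ, hρ, Or.inl hrw⟩
    · obtain ⟨ρ, hρ, hrw⟩ := key g g h h hg hg hh hh; exact ⟨ρ, hρ, Or.inr (Or.inl hrw)⟩
    · obtain ⟨ρ, hρ, hrw⟩ := key g h g g hg hh hg hg; exact ⟨ρ, hρ, Or.inl hrw⟩
    · obtain ⟨ρ, hρ, hrw⟩ := key g h g h hg hh hg hh; exact ⟨ρ, hρ, Or.inr (Or.inl hrw)⟩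
    · obtain ⟨ρ, hρ, hrw⟩ := key g h h g hg hh hh hg; exact ⟨ρ, hρ, Or.inl hrw⟩
    · obtain ⟨ρ, hρ, hrw⟩ := key g h h h hg hh hh hh; exact ⟨ρ, hρ, Or.inr (Or.inl hrw)⟩
    · obtain ⟨ρ, hρ, hrw⟩ := key h g g g hh hg hg hg; exact ⟨ρ, hρ, Or.inr (Or.inr (Or.inl hrw))⟩
    · obtain ⟨ρ, hρ, hrw⟩ := key h g g h hh hg hg hh; exact ⟨ρ, hρ, Or.inr (Or.inr (Or.inr hrw))⟩
    · obtain ⟨ρ, hρ, hrw⟩ := key h g h g hh hg hh hg; exact ⟨ρ, hρ, Or.inr (Or.inr (Or.inl hrw))⟩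
    · obtain ⟨ρ, hρ, hrw⟩ := key h g h h hh hg hh hh; exact ⟨ρ, hρ, Or.inr (Or.inr (Or.inr hrw))⟩
    · obtain ⟨ρ, hρ, hrw⟩ := key h h g g hh hh hg hg; exact ⟨ρ, hρ, Or.inr (Or.inr (Or.inl hrw))⟩
    · obtain ⟨ρ, hρ, hrw⟩ := key h h g h hh hh hg hh; exact ⟨ρ, hρ, Or.inr (Or.inr (Or.inr hrw))⟩
    · obtain ⟨ρ, hρ, hrw⟩ := key h h h g hh hh hh hg; exact ⟨ρ, hρ, Or.inr (Or.inr (Or.inl hrw))⟩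
    · obtain ⟨ρ, hρ, hrw⟩ := key h h h h hh hh hh hh; exact ⟨ρ, hρ, Or.inr (Or.inr (Or.inr hrw))⟩
  · -- singular
    intro φ hφ
    exact hsing φ (hmemS φ hφ)
  · -- semitransitive
    intro x y
    obtain ⟨φ, hφ, hc⟩ := hst x y
    rcases hc with hc | hc
    · obtain ⟨ψ, hψ, hψx⟩ := (hSTGe x y).mpr ⟨φ, hφ, hc⟩
      exact ⟨ψ, hψ, Or.inl hψx⟩
    · obtain ⟨ψ, hψ, hψx⟩ := (hSTGe y x).mpr ⟨φ, hφ, hc⟩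
      exact ⟨ψ, hψ, Or.inr hψx⟩
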